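/- Suppose each correct process p delivers at most one value d(p), and whenever two correct processes p, q are adjacent in the trust graph G_{F,S} (their quorums intersect outside F) they deliver the same value (d(p) = d(q) when both defined). Then the number of distinct values delivered by correct processes is at most the independence number of G_{F,S}. -/

import Mathlib

/-- The trust graph `G_{F,S}`: vertices are processes not in `F`, with an edge
between distinct `p`, `q` iff their quorums intersect outside `F`. -/
def trustGraph {Proc : Type*} [DecidableEq Proc] (F : Finset Proc) (S : Proc → Finset Proc) :
    SimpleGraph {p : Proc // p ∉ F} where
  Adj p q := p ≠ q ∧ ¬ (S p.1 ∩ S q.1 ⊆ F)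
  symm := ⟨fun p q ⟨h1, h2⟩ => ⟨h1.symm, by rwa [Finset.inter_comm]⟩⟩
  loopless := ⟨fun p ⟨h, _⟩ => h rfl⟩

/-- A set of vertices is independent if no two of its members are adjacent. -/
def IsIndepSet {V : Type*} (G : SimpleGraph V) (I : Set V) : Prop :=
  ∀ p ∈ I, ∀ q ∈ I, ¬ G.Adj p q

/-- The independence number: maximum cardinality of an independent set. -/
noncomputable def indepNum {V : Type*} [Fintype V] (G : SimpleGraph V) : ℕ :=
  sSup {n | ∃ s : Finset V, IsIndepSet G ↑s ∧ s.card = n}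

/-- if correct processes whose quorums intersect outside `F` never deliver
different values, then the number of distinct delivered values is at most the
independence number of the trust graph. -/
theorem stmt2 {Proc : Type*} [Fintype Proc] [DecidableEq Proc] {M : Type*}
    (F : Finset Proc) (S : Proc → Finset Proc) (d : {p : Proc // p ∉ F} → Option M)
    (hagree : ∀ (p q : {p : Proc // p ∉ F}) (m₁ m₂ : M),
      ¬ (S p.1 ∩ S q.1 ⊆ F) → d p = some m₁ → d q = some m₂ → m₁ = m₂) :
    Set.ncard {m : M | ∃ p, d p = some m} ≤ indepNum (trustGraph F S) := by
  classical
  set D := {m : M | ∃ p, d p = some m} with hD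
  have hrep : ∀ m : D, ∃ p, d p = some (m : M) := fun m => m.2
  choose f hf using hrep
  have hinj : Function.Injective f := by
    intro a b h
    have h1 := hf a
    rw [h, hf b] at h1
    exact Subtype.ext (Option.some.inj h1).symm
  haveI : Finite D := Finite.of_injective f hinj
  haveI : Fintype D := Fintype.ofFinite D
  set s : Finset {p : Proc // p ∉ F} := Finset.univ.image f with hs
  have hcard : s.card = Fintype.card D := by
    rw [hs, Finset.card_image_of_injective _ hinj, Finset.card_univ]
  have hindep : IsIndepSet (trustGraph F S) ↑s := by
    intro p hp q hq hadj
    simp only [hs, Finset.coe_image, Finset.coe_univ, Set.image_univ, Set.mem_range] at hp hq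
    obtain ⟨a, rfl⟩ := hp
    obtain ⟨b, rfl⟩ := hq
    obtain ⟨hne, hnsub⟩ := hadj
    exact hne (congrArg f (Subtype.ext (hagree _ _ _ _ hnsub (hf a) (hf b))))
  have hncard : D.ncard = s.card := by
    rw [Set.ncard_eq_toFinset_card', Set.toFinset_card, hcard]
  rw [hncard, indepNum]
  exact le_csSup ⟨Fintype.card {p : Proc // p ∉ F}, by
      rintro n ⟨t, -, rfl⟩; exact Finset.card_le_univ t⟩ ⟨s, hindep, rfl⟩
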